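/- Let n ≥ 6 and let Γ' be a signed graph of order n that attains the maximum largest eigenvalue λ1 among all unbalanced, negative-C4-free signed graphs of order n, suppose A(Γ') has a nonnegative unit eigenvector corresponding to λ1(Γ'), suppose Γ' has exactly one negative edge v1v2, and suppose v3 is a vertex of degree n − 1 adjacent to both v1 and v2. Then the signed subgraph of Γ' induced on V(Γ') ∖ {v1, v2} is the all-positive complete graph (K_{n−2}, +). -/

import Mathlib

open scoped BigOperators

/-- A signed graph on the vertex set `Fin n`: a simple graph together with a
symmetric `±1` sign on each edge. -/
structure SignedGraph (n : ℕ) where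
  G : SimpleGraph (Fin n)
  sign : Fin n → Fin n → ℤ
  sign_symm : ∀ i j, sign i j = sign j i
  sign_pm : ∀ i j, G.Adj i j → sign i j = 1 ∨ sign i j = -1

namespace SignedGraph

variable {n : ℕ}

open Classical in
/-- The adjacency matrix of a signed graph, as a real matrix. -/
noncomputable def adjMatrix (Γ : SignedGraph n) : Matrix (Fin n) (Fin n) ℝ :=
  fun i j => if Γ.G.Adj i j then (Γ.sign i j : ℝ) else 0

/-- The largest eigenvalue (the index) of a signed graph. -/
noncomputable def lambda1 (Γ : SignedGraph n) : ℝ :=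
  sSup (spectrum ℝ Γ.adjMatrix)

/-- The sign of an unordered edge. -/
def signEdge (Γ : SignedGraph n) : Sym2 (Fin n) → ℤ :=
  Sym2.lift ⟨Γ.sign, Γ.sign_symm⟩

/-- The sign of a walk: the product of the signs of its edges. -/
def walkSign (Γ : SignedGraph n) {u v : Fin n} (w : Γ.G.Walk u v) : ℤ :=
  (w.edges.map Γ.signEdge).prod

/-- A negative cycle: a cycle whose sign is `-1`
(equivalently, with an odd number of negative edges). -/
def IsNegCycle (Γ : SignedGraph n) {u : Fin n} (c : Γ.G.Walk u u) : Prop :=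
  c.IsCycle ∧ Γ.walkSign c = -1

/-- A signed graph is unbalanced if it contains a negative cycle. -/
def Unbalanced (Γ : SignedGraph n) : Prop :=
  ∃ (u : Fin n) (c : Γ.G.Walk u u), Γ.IsNegCycle c

/-- A signed graph is negative-`C₄`-free if it contains no negative 4-cycle. -/
def NegC4Free (Γ : SignedGraph n) : Prop :=
  ∀ (u : Fin n) (c : Γ.G.Walk u u), c.IsCycle → c.length = 4 → Γ.walkSign c ≠ -1

end SignedGraph

/-- The signed graph `Γ₁`: vertices `2,…,n-1` induce an all-positive complete
graph, vertices `0` and `1` are joined to each other by a negative edge and to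
vertex `2` by positive edges, and have no other neighbours. -/
def Gamma1 (n : ℕ) : SignedGraph n where
  G :=
    { Adj := fun i j => i ≠ j ∧ (2 ≤ min i.val j.val ∨ max i.val j.val ≤ 2)
      symm := by
        constructor
        intro i j h
        refine ⟨Ne.symm h.1, ?_⟩
        rw [min_comm, max_comm]
        exact h.2
      loopless := by constructor; intro i h; exact h.1 rfl }
  sign := fun i j =>
    if (i.val = 0 ∧ j.val = 1) ∨ (i.val = 1 ∧ j.val = 0) then -1 else 1
  sign_symm := by
    intro i j
    try dsimp only
    by_cases h : (i.val = 0 ∧ j.val = 1) ∨ (i.val = 1 ∧ j.val = 0)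
    · rw [if_pos h, if_pos (by tauto)]
    · rw [if_neg h, if_neg (by tauto)]
  sign_pm := by
    intro i j _
    try dsimp only
    by_cases h : (i.val = 0 ∧ j.val = 1) ∨ (i.val = 1 ∧ j.val = 0)
    · rw [if_pos h]; right; rfl
    · rw [if_neg h]; left; rfl

/-- The signed graph `Γ₂`: vertices `4,…,n-1` induce an all-positive complete
graph, vertices `2` and `3` are joined by positive edges to all of `4,…,n-1`
(but not to each other), vertices `0` and `1` are joined to each other by a
negative edge and to `2` and `3` by positive edges, and have no other
neighbours. -/
def Gamma2 (n : ℕ) : SignedGraph n where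
  G :=
    { Adj := fun i j => i ≠ j ∧
        ((i.val ≤ 1 ∧ j.val ≤ 3) ∨ (j.val ≤ 1 ∧ i.val ≤ 3) ∨
         (2 ≤ i.val ∧ i.val ≤ 3 ∧ 4 ≤ j.val) ∨ (2 ≤ j.val ∧ j.val ≤ 3 ∧ 4 ≤ i.val) ∨
         (4 ≤ i.val ∧ 4 ≤ j.val))
      symm := by
        constructor
        intro i j h
        exact ⟨Ne.symm h.1, by tauto⟩
      loopless := by constructor; intro i h; exact h.1 rfl }
  sign := fun i j =>
    if (i.val = 0 ∧ j.val = 1) ∨ (i.val = 1 ∧ j.val = 0) then -1 else 1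
  sign_symm := by
    intro i j
    try dsimp only
    by_cases h : (i.val = 0 ∧ j.val = 1) ∨ (i.val = 1 ∧ j.val = 0)
    · rw [if_pos h, if_pos (by tauto)]
    · rw [if_neg h, if_neg (by tauto)]
  sign_pm := by
    intro i j _
    try dsimp only
    by_cases h : (i.val = 0 ∧ j.val = 1) ∨ (i.val = 1 ∧ j.val = 0)
    · rw [if_pos h]; right; rfl
    · rw [if_neg h]; left; rfl


/-- The all-negative complete signed graph `(K_n, -)`. -/
def NegKn (n : ℕ) : SignedGraph n where
  G := ⊤
  sign := fun _ _ => -1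
  sign_symm := fun _ _ => rfl
  sign_pm := fun _ _ _ => Or.inr rfl

/-- `Γ` is switching equivalent to `Γ'` (up to a relabelling of the vertices):
there is a bijection of the vertices matching the underlying graphs and a
`±1`-valued switching function `s` relating the two sign functions. -/
def SwitchingEquiv {n : ℕ} (Γ Γ' : SignedGraph n) : Prop :=
  ∃ e : Fin n ≃ Fin n, ∃ s : Fin n → ℤ, (∀ i, s i = 1 ∨ s i = -1) ∧
    (∀ i j, Γ.G.Adj i j ↔ Γ'.G.Adj (e i) (e j)) ∧
    (∀ i j, Γ.G.Adj i j → Γ.sign i j = s i * Γ'.sign (e i) (e j) * s j)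


/-! ### Auxiliary lemmas -/

open Matrix in
lemma rayleigh_le_sSup_spectrum {m : ℕ} (hm : 0 < m) (A : Matrix (Fin m) (Fin m) ℝ)
    (hA : A.IsHermitian) (y : Fin m → ℝ) (hy : ∑ i, y i ^ 2 = 1) :
    y ⬝ᵥ A.mulVec y ≤ sSup (spectrum ℝ A) := by
  haveI : Nonempty (Fin m) := ⟨⟨0, hm⟩⟩
  classical
  set μ := hA.eigenvalues with hμ
  set M := Finset.univ.sup' Finset.univ_nonempty μ with hM
  have hspec : spectrum ℝ A = Set.range μ := hA.spectrum_real_eq_range_eigenvalues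
  have hbdd : BddAbove (spectrum ℝ A) := (Matrix.finite_real_spectrum (A := A)).bddAbove
  obtain ⟨i0, -, hi0⟩ := Finset.exists_mem_eq_sup' (Finset.univ_nonempty (α := Fin m)) μ
  have hMmem : M ∈ spectrum ℝ A := by rw [hspec]; exact ⟨i0, hi0.symm⟩
  have hMle : M ≤ sSup (spectrum ℝ A) := le_csSup hbdd hMmem
  refine le_trans ?_ hMle
  set V : Matrix (Fin m) (Fin m) ℝ := (hA.eigenvectorUnitary : Matrix (Fin m) (Fin m) ℝ) with hV
  have hU1 : V * star V = 1 := (Matrix.mem_unitaryGroup_iff).mp (hA.eigenvectorUnitary).2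
  set z : Fin m → ℝ := star V *ᵥ y with hz
  have hdot : ∀ w : Fin m → ℝ, y ⬝ᵥ (V *ᵥ w) = z ⬝ᵥ w := by
    intro w
    rw [hz, dotProduct_mulVec, star_eq_conjTranspose,
      Matrix.conjTranspose_eq_transpose_of_trivial, ← Matrix.mulVec_transpose]
  have hzz : z ⬝ᵥ z = 1 := by
    have : z ⬝ᵥ z = y ⬝ᵥ (V *ᵥ z) := by
      rw [dotProduct_comm, hdot]
    rw [this, hz, Matrix.mulVec_mulVec, hU1, Matrix.one_mulVec]
    simpa [dotProduct, sq] using hy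
  have key : y ⬝ᵥ A.mulVec y = ∑ i, μ i * z i ^ 2 := by
    conv_lhs => rw [hA.spectral_theorem, Unitary.conjStarAlgAut_apply]
    rw [← Matrix.mulVec_mulVec, ← Matrix.mulVec_mulVec, hdot, ← hz]
    simp only [dotProduct, Matrix.mulVec_diagonal, Function.comp, RCLike.ofReal_real_eq_id, id_eq]
    exact Finset.sum_congr rfl fun i _ => by ring
  rw [key]
  calc ∑ i, μ i * z i ^ 2 ≤ ∑ i, M * z i ^ 2 := by
        refine Finset.sum_le_sum fun i _ => ?_
        exact mul_le_mul_of_nonneg_right (Finset.le_sup' μ (Finset.mem_univ i)) (sq_nonneg _)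
    _ = M := by
        rw [← Finset.mul_sum]
        have : ∑ i, z i ^ 2 = 1 := by simpa [dotProduct, sq] using hzz
        rw [this, mul_one]

namespace SignedGraph

variable {n : ℕ}

lemma adjMatrix_isHermitian (Γ : SignedGraph n) : Γ.adjMatrix.IsHermitian := by
  ext p q
  simp only [adjMatrix, Matrix.conjTranspose_apply, star_trivial]
  by_cases h : Γ.G.Adj q p
  · rw [if_pos h, if_pos h.symm, Γ.sign_symm]
  · rw [if_neg h, if_neg fun h' => h h'.symm]

@[simp] lemma signEdge_mk (Γ : SignedGraph n) (p q : Fin n) :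
    Γ.signEdge s(p, q) = Γ.sign p q := rfl

/-- The explicit 4-cycle walk. -/
def c4 {Γ : SignedGraph n} {p q r t : Fin n} (h1 : Γ.G.Adj p q) (h2 : Γ.G.Adj q r)
    (h3 : Γ.G.Adj r t) (h4 : Γ.G.Adj t p) : Γ.G.Walk p p :=
  .cons h1 (.cons h2 (.cons h3 (.cons h4 .nil)))

lemma c4_isCycle {Γ : SignedGraph n} {p q r t : Fin n} (h1 : Γ.G.Adj p q) (h2 : Γ.G.Adj q r)
    (h3 : Γ.G.Adj r t) (h4 : Γ.G.Adj t p) (hpr : p ≠ r) (hqt : q ≠ t) :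
    (c4 h1 h2 h3 h4).IsCycle := by
  have hpq := h1.ne
  have hqr := h2.ne
  have hrt := h3.ne
  have htp := h4.ne
  rw [SimpleGraph.Walk.isCycle_def]
  refine ⟨?_, by simp [c4], ?_⟩
  · rw [SimpleGraph.Walk.isTrail_def]
    simp only [c4, SimpleGraph.Walk.edges_cons, SimpleGraph.Walk.edges_nil,
      List.nodup_cons, List.mem_cons, List.mem_singleton, List.not_mem_nil,
      List.nodup_nil, and_true, not_or, List.mem_nil_iff, or_false]
    refine ⟨⟨?_, ?_, ?_⟩, ⟨?_, ?_⟩, ?_⟩ <;>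
      simp [Sym2.eq_iff] <;> tauto
  · simp only [c4, SimpleGraph.Walk.support_cons, SimpleGraph.Walk.support_nil,
      List.tail_cons, List.nodup_cons, List.mem_cons, List.mem_singleton,
      List.not_mem_nil, List.nodup_nil, and_true, not_or]
    refine ⟨⟨?_, ?_, ?_⟩, ⟨?_, ?_⟩, ?_⟩ <;> simp_all <;> tauto

lemma c4_length {Γ : SignedGraph n} {p q r t : Fin n} (h1 : Γ.G.Adj p q) (h2 : Γ.G.Adj q r)
    (h3 : Γ.G.Adj r t) (h4 : Γ.G.Adj t p) : (c4 h1 h2 h3 h4).length = 4 := rfl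

lemma c4_walkSign {Γ : SignedGraph n} {p q r t : Fin n} (h1 : Γ.G.Adj p q) (h2 : Γ.G.Adj q r)
    (h3 : Γ.G.Adj r t) (h4 : Γ.G.Adj t p) :
    Γ.walkSign (c4 h1 h2 h3 h4) = Γ.sign p q * (Γ.sign q r * (Γ.sign r t * Γ.sign t p)) := by
  simp [walkSign, c4, mul_assoc]

/-- Applying NegC4Free to an explicit 4-cycle. -/
lemma negC4_aux {Γ : SignedGraph n} (hfree : Γ.NegC4Free) {p q r t : Fin n}
    (h1 : Γ.G.Adj p q) (h2 : Γ.G.Adj q r) (h3 : Γ.G.Adj r t) (h4 : Γ.G.Adj t p)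
    (hpr : p ≠ r) (hqt : q ≠ t)
    (hsgn : Γ.sign p q * (Γ.sign q r * (Γ.sign r t * Γ.sign t p)) = -1) : False :=
  hfree p (c4 h1 h2 h3 h4) (c4_isCycle h1 h2 h3 h4 hpr hqt) (c4_length h1 h2 h3 h4)
    (by rw [c4_walkSign]; exact hsgn)

/-- Add a positive edge between `i` and `j`. -/
def addPosEdge (Γ : SignedGraph n) (i j : Fin n) : SignedGraph n where
  G :=
    { Adj := fun p q => Γ.G.Adj p q ∨ (i ≠ j ∧ ((p = i ∧ q = j) ∨ (p = j ∧ q = i)))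
      symm := by constructor; intro p q h; rcases h with h | h
                 · exact Or.inl h.symm
                 · exact Or.inr ⟨h.1, by tauto⟩
      loopless := by
        constructor; intro p h
        rcases h with h | ⟨hij, h⟩
        · exact Γ.G.loopless.irrefl p h
        · rcases h with ⟨rfl, rfl⟩ | ⟨rfl, rfl⟩ <;> exact hij rfl }
  sign := fun p q => if (p = i ∧ q = j) ∨ (p = j ∧ q = i) then 1 else Γ.sign p q
  sign_symm := by
    intro p q
    by_cases h : (p = i ∧ q = j) ∨ (p = j ∧ q = i)
    · rw [if_pos h, if_pos (by tauto)]
    · rw [if_neg h, if_neg (by tauto), Γ.sign_symm]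
  sign_pm := by
    intro p q hadj
    by_cases h : (p = i ∧ q = j) ∨ (p = j ∧ q = i)
    · rw [if_pos h]; left; rfl
    · rw [if_neg h]
      rcases hadj with hadj | ⟨_, hadj⟩
      · exact Γ.sign_pm p q hadj
      · tauto

lemma addPosEdge_adj (Γ : SignedGraph n) (i j : Fin n) (p q : Fin n) :
    (Γ.addPosEdge i j).G.Adj p q ↔
      Γ.G.Adj p q ∨ (i ≠ j ∧ ((p = i ∧ q = j) ∨ (p = j ∧ q = i))) := Iff.rfl

lemma addPosEdge_sign (Γ : SignedGraph n) (i j : Fin n) (p q : Fin n) :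
    (Γ.addPosEdge i j).sign p q =
      if (p = i ∧ q = j) ∨ (p = j ∧ q = i) then 1 else Γ.sign p q := rfl

lemma addPosEdge_sign_of_ne (Γ : SignedGraph n) {i j p q : Fin n}
    (h : ¬((p = i ∧ q = j) ∨ (p = j ∧ q = i))) :
    (Γ.addPosEdge i j).sign p q = Γ.sign p q := if_neg h

/-- Adding an edge preserves unbalancedness. -/
lemma addPosEdge_unbalanced (Γ : SignedGraph n) (i j : Fin n) (hnadj : ¬ Γ.G.Adj i j)
    (hub : Γ.Unbalanced) : (Γ.addPosEdge i j).Unbalanced := by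
  obtain ⟨u, w, hcyc, hsgn⟩ := hub
  have hle : ∀ e ∈ w.edges, e ∈ (Γ.addPosEdge i j).G.edgeSet := by
    intro e he
    have := w.edges_subset_edgeSet he
    revert this
    refine Sym2.ind (fun p q hpq => ?_) e
    exact Or.inl hpq
  refine ⟨u, w.transfer _ hle, hcyc.transfer hle, ?_⟩
  rw [walkSign, SimpleGraph.Walk.edges_transfer]
  rw [← hsgn, walkSign]
  apply congrArg
  apply List.map_congr_left
  intro e he
  have hmem := w.edges_subset_edgeSet he
  revert hmem
  refine Sym2.ind (fun p q hpq => ?_) e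
  simp only [signEdge_mk]
  apply addPosEdge_sign_of_ne
  rintro (⟨rfl, rfl⟩ | ⟨rfl, rfl⟩)
  · exact hnadj hpq
  · exact hnadj hpq.symm

/-- The adjacency matrix of `addPosEdge` pointwise. -/
lemma addPosEdge_adjMatrix (Γ : SignedGraph n) {i j : Fin n} (hij : i ≠ j)
    (hnadj : ¬ Γ.G.Adj i j) (p q : Fin n) :
    (Γ.addPosEdge i j).adjMatrix p q =
      Γ.adjMatrix p q + (if p = i ∧ q = j then 1 else 0) + (if p = j ∧ q = i then 1 else 0) := by
  classical
  simp only [adjMatrix]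
  by_cases h1 : p = i ∧ q = j
  · obtain ⟨rfl, rfl⟩ := h1
    rw [if_pos, if_neg hnadj, if_pos ⟨rfl, rfl⟩, if_neg (by rintro ⟨rfl, -⟩; exact hij rfl)]
    · rw [addPosEdge_sign, if_pos (Or.inl ⟨rfl, rfl⟩)]
      norm_num
    · exact Or.inr ⟨hij, Or.inl ⟨rfl, rfl⟩⟩
  · by_cases h2 : p = j ∧ q = i
    · obtain ⟨rfl, rfl⟩ := h2
      rw [if_pos, if_neg (fun h => hnadj h.symm), if_neg h1, if_pos ⟨rfl, rfl⟩]
      · rw [addPosEdge_sign, if_pos (Or.inr ⟨rfl, rfl⟩)]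
        norm_num
      · exact Or.inr ⟨hij, Or.inr ⟨rfl, rfl⟩⟩
    · rw [if_neg h1, if_neg h2, add_zero, add_zero]
      by_cases hadj : Γ.G.Adj p q
      · rw [if_pos hadj,
          if_pos (show (Γ.addPosEdge i j).G.Adj p q from Or.inl hadj),
          addPosEdge_sign_of_ne Γ (by tauto)]
      · rw [if_neg hadj, if_neg (show ¬ (Γ.addPosEdge i j).G.Adj p q from ?_)]
        rintro (h | ⟨-, h⟩)
        · exact hadj h
        · tauto

end SignedGraph

theorem extremal_induced_complete_positive
    (n : ℕ) (hn : 6 ≤ n) (Γ' : SignedGraph n)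
    (hub : Γ'.Unbalanced) (hfree : Γ'.NegC4Free)
    (hmax : ∀ Γ : SignedGraph n, Γ.Unbalanced → Γ.NegC4Free → Γ.lambda1 ≤ Γ'.lambda1)
    (x : Fin n → ℝ) (hx : Γ'.adjMatrix.mulVec x = Γ'.lambda1 • x)
    (hnn : ∀ i, 0 ≤ x i) (hunit : ∑ i, x i ^ 2 = 1)
    (a b c : Fin n) (hab : Γ'.G.Adj a b) (hneg : Γ'.sign a b = -1)
    (huniq : ∀ i j, Γ'.G.Adj i j → Γ'.sign i j = -1 → s(i, j) = s(a, b))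
    (hca : Γ'.G.Adj c a) (hcb : Γ'.G.Adj c b)
    (hdeg : ∀ j, j ≠ c → Γ'.G.Adj c j) :
    ∀ i j, i ≠ j → i ≠ a → i ≠ b → j ≠ a → j ≠ b →
      Γ'.G.Adj i j ∧ Γ'.sign i j = 1 := by
  classical
  have hca' : c ≠ a := hca.ne
  have hcb' : c ≠ b := hcb.ne
  have hab' : a ≠ b := hab.ne
  -- every edge other than `ab` is positive
  have hsign1 : ∀ p q, Γ'.G.Adj p q → ¬((p = a ∧ q = b) ∨ (p = b ∧ q = a)) →
      Γ'.sign p q = 1 := by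
    intro p q hadj hne
    rcases Γ'.sign_pm p q hadj with h | h
    · exact h
    · exfalso
      have := huniq p q hadj h
      rw [Sym2.eq_iff] at this
      tauto
  -- the neighbours of `a` are exactly `b` and `c`
  have claimA : ∀ u, Γ'.G.Adj a u → u = b ∨ u = c := by
    intro u hau
    by_contra hcon
    push_neg at hcon
    obtain ⟨hub', huc⟩ := hcon
    have hua : u ≠ a := hau.ne'
    have h3 : Γ'.G.Adj u c := (hdeg u huc).symm
    refine SignedGraph.negC4_aux hfree hab.symm hau h3 hcb
      (fun h => hub' h.symm) (fun h => hca' h.symm) ?_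
    rw [Γ'.sign_symm b a, hneg,
      hsign1 a u hau (by rintro (⟨-, rfl⟩ | ⟨rfl, -⟩) <;> tauto),
      hsign1 u c h3 (by rintro (⟨rfl, -⟩ | ⟨-, rfl⟩) <;> tauto),
      hsign1 c b hcb (by rintro (⟨rfl, -⟩ | ⟨rfl, -⟩) <;> tauto)]
    norm_num
  -- the neighbours of `b` are exactly `a` and `c`
  have claimB : ∀ u, Γ'.G.Adj b u → u = a ∨ u = c := by
    intro u hbu
    by_contra hcon
    push_neg at hcon
    obtain ⟨hua', huc⟩ := hcon
    have hub' : u ≠ b := hbu.ne'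
    have h3 : Γ'.G.Adj u c := (hdeg u huc).symm
    refine SignedGraph.negC4_aux hfree hab hbu h3 hca
      (fun h => hua' h.symm) (fun h => hcb' h.symm) ?_
    rw [hneg,
      hsign1 b u hbu (by rintro (⟨rfl, -⟩ | ⟨-, rfl⟩) <;> tauto),
      hsign1 u c h3 (by rintro (⟨rfl, -⟩ | ⟨-, rfl⟩) <;> tauto),
      hsign1 c a hca (by rintro (⟨rfl, -⟩ | ⟨rfl, -⟩) <;> tauto)]
    norm_num
  -- eigen-equation, entrywise
  have hx' : ∀ u, (∑ q, Γ'.adjMatrix u q * x q) = Γ'.lambda1 * x u := by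
    intro u
    have := congrFun hx u
    simpa [Matrix.mulVec, dotProduct] using this
  -- positivity of the eigenvector away from `a`, `b`
  have hzero_nb : ∀ p, p ≠ a → p ≠ b → x p = 0 → ∀ q, Γ'.G.Adj p q → x q = 0 := by
    intro p hpa hpb hxp q hq
    have hsum := hx' p
    rw [hxp, mul_zero] at hsum
    have hterm : ∀ q' ∈ Finset.univ, (0:ℝ) ≤ Γ'.adjMatrix p q' * x q' := by
      intro q' _
      by_cases hadj : Γ'.G.Adj p q'
      · have hs := hsign1 p q' hadj (by rintro (⟨rfl, -⟩ | ⟨rfl, -⟩) <;> tauto)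
        simp only [SignedGraph.adjMatrix, if_pos hadj, hs]
        simpa using hnn q'
      · simp [SignedGraph.adjMatrix, hadj]
    have h0 := (Finset.sum_eq_zero_iff_of_nonneg hterm).mp hsum q (Finset.mem_univ q)
    have hs := hsign1 p q hq (by rintro (⟨rfl, -⟩ | ⟨rfl, -⟩) <;> tauto)
    rw [SignedGraph.adjMatrix] at h0
    rw [if_pos hq, hs] at h0
    simpa using h0
  have hpos : ∀ u, u ≠ a → u ≠ b → 0 < x u := by
    intro u hua hub0
    rcases (hnn u).lt_or_eq with h | h
    · exact h
    exfalso
    have hxu : x u = 0 := h.symm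
    have hxc : x c = 0 := by
      by_cases huc : u = c
      · rw [← huc]; exact hxu
      · exact hzero_nb u hua hub0 hxu c (hdeg u huc).symm
    have hall : ∀ q, x q = 0 := by
      intro q
      by_cases hqc : q = c
      · rw [hqc]; exact hxc
      · exact hzero_nb c hca' hcb' hxc q (hdeg q hqc)
    rw [Finset.sum_eq_zero (fun q _ => by rw [hall q]; ring)] at hunit
    norm_num at hunit
  -- main argument
  intro i j hij hia hib hja hjb
  have hadj : Γ'.G.Adj i j := by
    by_contra hnadj
    have hic : i ≠ c := by
      rintro rfl
      exact hnadj (hdeg j (fun h => hij h.symm))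
    have hjc : j ≠ c := by
      rintro rfl
      exact hnadj (hdeg i hic).symm
    set Γ'' := Γ'.addPosEdge i j with hΓ''
    have claimA'' : ∀ u, Γ''.G.Adj a u → u = b ∨ u = c := by
      rintro u (h | ⟨-, (⟨h1, -⟩ | ⟨h1, -⟩)⟩)
      · exact claimA u h
      · exact absurd h1.symm hia
      · exact absurd h1.symm hja
    have claimB'' : ∀ u, Γ''.G.Adj b u → u = a ∨ u = c := by
      rintro u (h | ⟨-, (⟨h1, -⟩ | ⟨h1, -⟩)⟩)
      · exact claimB u h
      · exact absurd h1.symm hib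
      · exact absurd h1.symm hjb
    have negEdge'' : ∀ p q, Γ''.G.Adj p q → Γ''.sign p q = -1 →
        (p = a ∧ q = b) ∨ (p = b ∧ q = a) := by
      intro p q hpq hs
      by_cases h : (p = i ∧ q = j) ∨ (p = j ∧ q = i)
      · rw [SignedGraph.addPosEdge_sign, if_pos h] at hs
        norm_num at hs
      · rw [SignedGraph.addPosEdge_sign_of_ne Γ' h] at hs
        have hpq' : Γ'.G.Adj p q := by
          rcases hpq with h' | ⟨-, h'⟩
          · exact h'
          · tauto
        have := huniq p q hpq' hs
        rw [Sym2.eq_iff] at this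
        tauto
    have hfree'' : Γ''.NegC4Free := by
      intro u w hcyc hlen hsgn
      cases w with
      | nil => simp at hlen
      | cons h1 w =>
      cases w with
      | nil => simp at hlen
      | cons h2 w =>
      cases w with
      | nil => simp at hlen
      | cons h3 w =>
      cases w with
      | nil => simp at hlen
      | cons h4 w =>
      cases w with
      | cons h5 w => simp [SimpleGraph.Walk.length_cons] at hlen
      | nil =>
        rename_i v1 v2 v3
        rw [SimpleGraph.Walk.isCycle_def] at hcyc
        obtain ⟨-, -, hnd⟩ := hcyc
        simp only [SimpleGraph.Walk.support_cons, SimpleGraph.Walk.support_nil,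
          List.tail_cons, List.nodup_cons, List.mem_cons, List.mem_singleton,
          List.not_mem_nil, or_false, not_or, List.nodup_nil, and_true] at hnd
        obtain ⟨⟨hd12, hd13, hd1u⟩, ⟨hd23, hd2u⟩, hd3u⟩ := hnd
        simp only [SignedGraph.walkSign, SimpleGraph.Walk.edges_cons,
          SimpleGraph.Walk.edges_nil, List.map_cons, List.map_nil, List.prod_cons,
          List.prod_nil, SignedGraph.signEdge_mk, mul_one] at hsgn
        have hor : Γ''.sign u v1 = -1 ∨ Γ''.sign v1 v2 = -1 ∨ Γ''.sign v2 v3 = -1 ∨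
            Γ''.sign v3 u = -1 := by
          by_contra hc
          push_neg at hc
          obtain ⟨c1, c2, c3, c4⟩ := hc
          rw [(Γ''.sign_pm _ _ h1).resolve_right c1, (Γ''.sign_pm _ _ h2).resolve_right c2,
            (Γ''.sign_pm _ _ h3).resolve_right c3, (Γ''.sign_pm _ _ h4).resolve_right c4] at hsgn
          norm_num at hsgn
        rcases hor with h | h | h | h
        · rcases negEdge'' u v1 h1 h with ⟨e1, e2⟩ | ⟨e1, e2⟩ <;> subst e1 <;> subst e2
          · rcases claimA'' v3 h4.symm with rfl | rfl <;>
              rcases claimB'' v2 h2 with rfl | rfl <;> simp_all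
          · rcases claimB'' v3 h4.symm with rfl | rfl <;>
              rcases claimA'' v2 h2 with rfl | rfl <;> simp_all
        · rcases negEdge'' v1 v2 h2 h with ⟨e1, e2⟩ | ⟨e1, e2⟩ <;> subst e1 <;> subst e2
          · rcases claimA'' u h1.symm with rfl | rfl <;>
              rcases claimB'' v3 h3 with rfl | rfl <;> simp_all
          · rcases claimB'' u h1.symm with rfl | rfl <;>
              rcases claimA'' v3 h3 with rfl | rfl <;> simp_all
        · rcases negEdge'' v2 v3 h3 h with ⟨e1, e2⟩ | ⟨e1, e2⟩ <;> subst e1 <;> subst e2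
          · rcases claimA'' v1 h2.symm with rfl | rfl <;>
              rcases claimB'' u h4 with rfl | rfl <;> simp_all
          · rcases claimB'' v1 h2.symm with rfl | rfl <;>
              rcases claimA'' u h4 with rfl | rfl <;> simp_all
        · rcases negEdge'' v3 u h4 h with ⟨e1, e2⟩ | ⟨e1, e2⟩ <;> subst e1 <;> subst e2
          · rcases claimA'' v2 h3.symm with rfl | rfl <;>
              rcases claimB'' v1 h1 with rfl | rfl <;> simp_all
          · rcases claimB'' v2 h3.symm with rfl | rfl <;>
              rcases claimA'' v1 h1 with rfl | rfl <;> simp_all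
    have hub'' : Γ''.Unbalanced := Γ'.addPosEdge_unbalanced i j hnadj hub
    -- Rayleigh quotient comparison
    have e1 : ∀ p, (∑ q, (if p = i ∧ q = j then (1:ℝ) else 0) * x q)
        = if p = i then x j else 0 := by
      intro p
      rw [Finset.sum_eq_single j]
      · by_cases hp : p = i <;> simp [hp]
      · intro q _ hq; simp [hq]
      · intro h; exact absurd (Finset.mem_univ j) h
    have e2 : ∀ p, (∑ q, (if p = j ∧ q = i then (1:ℝ) else 0) * x q)
        = if p = j then x i else 0 := by
      intro p
      rw [Finset.sum_eq_single i]
      · by_cases hp : p = j <;> simp [hp]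
      · intro q _ hq; simp [hq]
      · intro h; exact absurd (Finset.mem_univ i) h
    have hmv : ∀ p, (Γ''.adjMatrix.mulVec x) p
        = (Γ'.adjMatrix.mulVec x) p + (if p = i then x j else 0)
          + (if p = j then x i else 0) := by
      intro p
      simp only [Matrix.mulVec, dotProduct]
      calc ∑ q, Γ''.adjMatrix p q * x q
          = ∑ q, (Γ'.adjMatrix p q * x q + (if p = i ∧ q = j then 1 else 0) * x q
              + (if p = j ∧ q = i then 1 else 0) * x q) := by
            refine Finset.sum_congr rfl fun q _ => ?_
            rw [Γ'.addPosEdge_adjMatrix hij hnadj p q]; ring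
        _ = (∑ q, Γ'.adjMatrix p q * x q) + (if p = i then x j else 0)
              + (if p = j then x i else 0) := by
            rw [Finset.sum_add_distrib, Finset.sum_add_distrib, e1 p, e2 p]
    have hbase : dotProduct x (Γ'.adjMatrix.mulVec x) = Γ'.lambda1 := by
      rw [hx]
      simp only [dotProduct, Pi.smul_apply, smul_eq_mul]
      rw [show ∑ q, x q * (Γ'.lambda1 * x q) = Γ'.lambda1 * ∑ q, x q ^ 2 by
        rw [Finset.mul_sum]; exact Finset.sum_congr rfl fun q _ => by ring]
      rw [hunit, mul_one]
    have hray : dotProduct x (Γ''.adjMatrix.mulVec x)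
        = Γ'.lambda1 + 2 * (x i * x j) := by
      calc dotProduct x (Γ''.adjMatrix.mulVec x)
          = ∑ p, x p * ((Γ'.adjMatrix.mulVec x) p + (if p = i then x j else 0)
              + (if p = j then x i else 0)) := by
            simp only [dotProduct]
            exact Finset.sum_congr rfl fun p _ => by rw [hmv p]
        _ = (∑ p, x p * (Γ'.adjMatrix.mulVec x) p) + (∑ p, x p * (if p = i then x j else 0))
              + (∑ p, x p * (if p = j then x i else 0)) := by
            rw [← Finset.sum_add_distrib, ← Finset.sum_add_distrib]
            exact Finset.sum_congr rfl fun p _ => by ring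
        _ = Γ'.lambda1 + x i * x j + x j * x i := by
            have hA : (∑ p, x p * (Γ'.adjMatrix.mulVec x) p)
                = dotProduct x (Γ'.adjMatrix.mulVec x) := rfl
            rw [hA, hbase]
            congr 1
            · congr 1
              rw [Finset.sum_eq_single i]
              · simp
              · intro q _ hq; simp [hq]
              · intro h; exact absurd (Finset.mem_univ i) h
            · rw [Finset.sum_eq_single j]
              · simp
              · intro q _ hq; simp [hq]
              · intro h; exact absurd (Finset.mem_univ j) h
        _ = Γ'.lambda1 + 2 * (x i * x j) := by ring
    have hlt : Γ'.lambda1 < Γ''.lambda1 := by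
      have h1 : 0 < x i * x j := mul_pos (hpos i hia hib) (hpos j hja hjb)
      calc Γ'.lambda1 < Γ'.lambda1 + 2 * (x i * x j) := by linarith
        _ = dotProduct x (Γ''.adjMatrix.mulVec x) := hray.symm
        _ ≤ sSup (spectrum ℝ Γ''.adjMatrix) :=
            rayleigh_le_sSup_spectrum (by omega) _ Γ''.adjMatrix_isHermitian x hunit
        _ = Γ''.lambda1 := rfl
    exact absurd (hmax Γ'' hub'' hfree'') (not_le.mpr hlt)
  exact ⟨hadj, hsign1 i j hadj (by rintro (⟨rfl, -⟩ | ⟨rfl, -⟩) <;> tauto)⟩
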